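/- Let k ≥ 2 and let {t_n} be the 2k-nacci sequence. Then for all l ≥ 0 and 0 ≤ j ≤ 2k-1, t_{2^l(2k+1)+j} ≡ t_j (mod 2^{l+1}). -/

import Mathlib

private lemma aux_refl1 (K : ℕ) (g : ℕ → ℕ) :
    ∑ i ∈ Finset.Icc 1 K, g (K + 1 - i) = ∑ i ∈ Finset.Icc 1 K, g i := by
  apply Finset.sum_nbij' (fun i => K + 1 - i) (fun i => K + 1 - i)
  all_goals simp only [Finset.mem_Icc]
  all_goals intros
  all_goals first | trivial | omega

private lemma aux_refl2 (K : ℕ) (hK : 1 ≤ K) (g : ℕ → ℕ) :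
    ∑ i ∈ Finset.Icc 1 K, g (K - i) = ∑ i ∈ Finset.Icc 0 (K-1), g i := by
  apply Finset.sum_nbij' (fun i => K - i) (fun i => K - i)
  all_goals simp only [Finset.mem_Icc]
  all_goals intros
  all_goals first | trivial | omega

private lemma aux_split (K : ℕ) (hK : 1 ≤ K) (g : ℕ → ℕ) :
    g 0 + ∑ i ∈ Finset.Icc 1 K, g i = ∑ i ∈ Finset.Icc 0 (K-1), g i + g K := by
  have h1 : ∑ i ∈ Finset.Icc 0 K, g i = g 0 + ∑ i ∈ Finset.Icc 1 K, g i := by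
    rw [Finset.Icc_eq_cons_Ioc (Nat.zero_le K), Finset.sum_cons, ← Finset.Icc_add_one_left_eq_Ioc, zero_add]
  have h2 : ∑ i ∈ Finset.Icc 0 K, g i = ∑ i ∈ Finset.Icc 0 (K-1), g i + g K := by
    have hKK : K = (K - 1) + 1 := by omega
    rw [hKK, Finset.sum_Icc_succ_top (by omega)]
    simp
  omega

private lemma aux_lin (t : ℕ → ℕ) (K : ℕ) (hK : 1 ≤ K)
    (hrec : ∀ n, K ≤ n → t n = ∑ i ∈ Finset.Icc 1 K, t (n - i)) :
    ∀ n, t (n + K + 1) + t n = 2 * t (n + K) := by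
  intro n
  have e1 : t (n + K + 1) = ∑ i ∈ Finset.Icc 1 K, t (n + i) := by
    rw [hrec (n + K + 1) (by omega)]
    rw [show (∑ i ∈ Finset.Icc 1 K, t (n + K + 1 - i))
        = ∑ i ∈ Finset.Icc 1 K, (fun j => t (n + j)) (K + 1 - i) from
      Finset.sum_congr rfl (fun i hi => by
        simp only [Finset.mem_Icc] at hi; congr 1; omega)]
    simpa using aux_refl1 K (fun j => t (n + j))
  have e2 : t (n + K) = ∑ i ∈ Finset.Icc 0 (K - 1), t (n + i) := by
    rw [hrec (n + K) (by omega)]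
    rw [show (∑ i ∈ Finset.Icc 1 K, t (n + K - i))
        = ∑ i ∈ Finset.Icc 1 K, (fun j => t (n + j)) (K - i) from
      Finset.sum_congr rfl (fun i hi => by
        simp only [Finset.mem_Icc] at hi; congr 1; omega)]
    simpa using aux_refl2 K hK (fun j => t (n + j))
  have hs := aux_split K hK (fun j => t (n + j))
  simp only [Nat.add_zero] at hs
  rw [e1, e2]
  omega

private def dd (t : ℕ → ℕ) (K : ℕ) : ℕ → ℕ → ℤ
  | 0 => fun n => (t n : ℤ)
  | (i+1) => fun n => dd t K i (n + K) - dd t K i n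

private lemma lemA (t : ℕ → ℕ) (K : ℕ)
    (hlin : ∀ n, t (n + K + 1) + t n = 2 * t (n + K)) :
    ∀ i n, dd t K i (n + (K+1)) = dd t K i n + 2 * dd t K (i+1) n := by
  intro i
  induction i with
  | zero =>
    intro n
    have := hlin n
    simp only [dd]
    have hc : ((t (n + K + 1) : ℤ)) + t n = 2 * t (n + K) := by exact_mod_cast this
    have hidx : n + (K + 1) = n + K + 1 := by omega
    rw [hidx]
    linarith
  | succ i ih =>
    intro n
    have s1 : dd t K (i+1) (n + (K+1)) = dd t K i (n + (K+1) + K) - dd t K i (n + (K+1)) := rfl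
    have s2 : dd t K (i+1) n = dd t K i (n + K) - dd t K i n := rfl
    have s3 : dd t K (i+1+1) n = dd t K (i+1) (n + K) - dd t K (i+1) n := rfl
    have hidx : n + (K + 1) + K = n + K + (K + 1) := by omega
    rw [hidx] at s1
    have h1 := ih (n + K)
    have h2 := ih n
    rw [s1, s2, s3]
    linarith

private lemma lemB (t : ℕ → ℕ) (K : ℕ)
    (hlin : ∀ n, t (n + K + 1) + t n = 2 * t (n + K)) :
    ∀ m i n, dd t K i (n + m * (K+1)) =
      ∑ j ∈ Finset.range (m+1), (Nat.choose m j : ℤ) * 2^j * dd t K (i+j) n := by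
  intro m
  induction m with
  | zero => intro i n; simp
  | succ m ih =>
    intro i n
    have hidx : n + (m+1) * (K+1) = (n + m * (K+1)) + (K + 1) := by ring
    rw [hidx, lemA t K hlin, ih i n, ih (i+1) n]
    have e1 : ∑ j ∈ Finset.range (m + 1 + 1), ((m+1).choose j : ℤ) * 2 ^ j * dd t K (i + j) n
        = (∑ j ∈ Finset.range (m + 1), ((m+1).choose (j+1) : ℤ) * 2 ^ (j+1) * dd t K (i + (j+1)) n)
          + ((m+1).choose 0 : ℤ) * 2 ^ 0 * dd t K (i + 0) n :=
      Finset.sum_range_succ' _ _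
    have e2 : ∑ j ∈ Finset.range (m + 1), ((m).choose j : ℤ) * 2 ^ j * dd t K (i + j) n
        = (∑ j ∈ Finset.range m, ((m).choose (j+1) : ℤ) * 2 ^ (j+1) * dd t K (i + (j+1)) n)
          + ((m).choose 0 : ℤ) * 2 ^ 0 * dd t K (i + 0) n :=
      Finset.sum_range_succ' _ _
    have e3 : ∑ j ∈ Finset.range (m+1), ((m).choose (j+1) : ℤ) * 2 ^ (j+1) * dd t K (i + (j+1)) n
        = (∑ j ∈ Finset.range m, ((m).choose (j+1) : ℤ) * 2 ^ (j+1) * dd t K (i + (j+1)) n)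
          + ((m).choose (m+1) : ℤ) * 2 ^ (m+1) * dd t K (i + (m+1)) n :=
      Finset.sum_range_succ _ _
    rw [e1, e2]
    have e4 : ∑ j ∈ Finset.range (m+1), ((m+1).choose (j+1) : ℤ) * 2 ^ (j+1) * dd t K (i + (j+1)) n
        = (∑ j ∈ Finset.range (m+1), ((m).choose (j+1) : ℤ) * 2 ^ (j+1) * dd t K (i + (j+1)) n)
          + 2 * ∑ j ∈ Finset.range (m+1), ((m).choose j : ℤ) * 2 ^ j * dd t K (i + 1 + j) n := by
      rw [Finset.mul_sum, ← Finset.sum_add_distrib]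
      apply Finset.sum_congr rfl
      intro j hj
      have hch : (m+1).choose (j+1) = m.choose (j+1) + m.choose j := by
        rw [Nat.choose_succ_succ', Nat.add_comm]
      have hii : i + 1 + j = i + (j + 1) := by omega
      rw [hch, hii]
      push_cast
      ring
    rw [e4, e3]
    simp [Nat.choose_succ_self]
    ring

private lemma aux_dvd_choose (l j : ℕ) (hj : 1 ≤ j) : 2^(l+1) ∣ Nat.choose (2^l) j * 2^j := by
  rcases lt_or_ge (2^l) j with h | h
  · rw [Nat.choose_eq_zero_of_lt h]; simp
  · have hj0 : j ≠ 0 := by omega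
    have key : Nat.choose (2^l) j * j = 2^l * Nat.choose (2^l - 1) (j-1) := by
      have := Nat.add_one_mul_choose_eq (2^l - 1) (j-1)
      have h1 : 2^l - 1 + 1 = 2^l := by
        have : 0 < 2^l := Nat.pow_pos (by norm_num)
        omega
      have h2 : j - 1 + 1 = j := by omega
      rw [h1, h2] at this
      omega
    set v := j.factorization 2 with hv
    have hvlt : v < j := Nat.factorization_lt 2 hj0
    have hsplit : 2^v * (j / 2^v) = j := Nat.ordProj_mul_ordCompl_eq_self j 2
    have hodd : ¬ (2 ∣ j / 2^v) := Nat.not_dvd_ordCompl Nat.prime_two hj0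
    have hcop : Nat.Coprime (2^l) (j / 2^v) :=
      Nat.Coprime.pow_left l ((Nat.Prime.coprime_iff_not_dvd Nat.prime_two).mpr hodd)
    have hdvd1 : 2^l ∣ Nat.choose (2^l) j * j := Dvd.intro _ key.symm
    have hdvd2 : 2^l ∣ (Nat.choose (2^l) j * 2^v) * (j / 2^v) := by
      rw [mul_assoc, hsplit]; exact hdvd1
    have hdvd3 : 2^l ∣ Nat.choose (2^l) j * 2^v := hcop.dvd_of_dvd_mul_right hdvd2
    have hexp : j = v + (j - v - 1) + 1 := by omega
    calc 2^(l+1) = 2^l * 2 := by ring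
    _ ∣ (Nat.choose (2^l) j * 2^v * 2^(j-v-1)) * 2 :=
        mul_dvd_mul (hdvd3.mul_right _) dvd_rfl
    _ = Nat.choose (2^l) j * 2^j := by
        rw [show 2^j = 2^(v + (j - v - 1) + 1) from by rw [← hexp]]
        rw [pow_add, pow_add, pow_one]; ring

theorem twoknacci_congruence (k : ℕ) (hk : 2 ≤ k) (t : ℕ → ℕ)
    (h0 : t 0 = 0)
    (h1 : ∀ n, 1 ≤ n → n ≤ 2 * k - 1 → t n = 1)
    (hrec : ∀ n, 2 * k ≤ n → t n = ∑ i ∈ Finset.Icc 1 (2 * k), t (n - i)) :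
    ∀ l j : ℕ, j ≤ 2 * k - 1 →
      t (2 ^ l * (2 * k + 1) + j) ≡ t j [MOD 2 ^ (l + 1)] := by
  intro l j _
  have hK1 : 1 ≤ 2 * k := by omega
  have hlin := aux_lin t (2 * k) hK1 hrec
  have hB := lemB t (2 * k) hlin (2^l) 0 j
  have hidx : 2 ^ l * (2 * k + 1) + j = j + 2^l * (2 * k + 1) := by ring
  have hdd0 : ∀ n, dd t (2 * k) 0 n = (t n : ℤ) := fun n => rfl
  have hsum : ∑ i ∈ Finset.range (2^l + 1), ((2^l).choose i : ℤ) * 2 ^ i * dd t (2 * k) (0 + i) j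
      = (∑ i ∈ Finset.range (2^l), ((2^l).choose (i+1) : ℤ) * 2 ^ (i+1) * dd t (2 * k) (0 + (i+1)) j)
        + ((2^l).choose 0 : ℤ) * 2 ^ 0 * dd t (2 * k) (0 + 0) j :=
    Finset.sum_range_succ' _ _
  have hkey : (t (2 ^ l * (2 * k + 1) + j) : ℤ) - (t j : ℤ)
      = ∑ i ∈ Finset.range (2^l), ((2^l).choose (i+1) : ℤ) * 2 ^ (i+1) * dd t (2 * k) (0 + (i+1)) j := by
    rw [hidx, ← hdd0, hB, hsum]
    simp [hdd0]
  have hdvd : (((2^(l+1) : ℕ)) : ℤ) ∣ (t (2 ^ l * (2 * k + 1) + j) : ℤ) - (t j : ℤ) := by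
    rw [hkey]
    apply Finset.dvd_sum
    intro i _
    have hn : 2^(l+1) ∣ (2^l).choose (i+1) * 2^(i+1) := aux_dvd_choose l (i+1) (by omega)
    have hz : (((2^(l+1) : ℕ)) : ℤ) ∣ (((2^l).choose (i+1) : ℤ) * 2^(i+1)) := by
      have h' := Int.natCast_dvd_natCast.mpr hn
      push_cast at h' ⊢
      exact h'
    exact hz.mul_right _
  exact (Nat.modEq_iff_dvd.mpr hdvd).symm
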